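/- Suppose ψ, φ : ℝ³ \ F → ℝ are C² functions (F a finite set) satisfying Δψ = (γ ψ^{2p-2} - φ)ψ and Δφ = 4πψ² on ℝ³ \ F, with ψ ≥ 0, γ ≥ 0, p ≥ 1. Then P := √(4πψ² + φ²) is subharmonic on the set where P > 0: specifically, ΔP² ≥ 2|∇P|², hence ΔP ≥ 0 there. -/

import Mathlib

open Real MeasureTheory Topology Filter

/-- The Laplacian of a function on ℝ³, as the sum of second derivatives along
the coordinate directions. -/
noncomputable def lap (f : EuclideanSpace ℝ (Fin 3) → ℝ) (x : EuclideanSpace ℝ (Fin 3)) : ℝ :=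
  ∑ i : Fin 3, iteratedDeriv 2 (fun t : ℝ => f (x + t • EuclideanSpace.single i 1)) 0


lemma diffAt_deriv {f : ℝ → ℝ} (hf : ContDiffAt ℝ 2 f 0) :
    DifferentiableAt ℝ (deriv f) 0 := by
  obtain ⟨u, hu, hfu⟩ := hf.contDiffOn le_rfl (by norm_num)
  have hu' : interior u ∈ 𝓝 (0:ℝ) := by rwa [interior_mem_nhds]
  have h1 : ContDiffOn ℝ 1 (deriv f) (interior u) :=
    (hfu.mono interior_subset).deriv_of_isOpen isOpen_interior (by norm_num)
  exact (h1.contDiffAt hu').differentiableAt (by norm_num)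

lemma ev_diff {f : ℝ → ℝ} (hf : ContDiffAt ℝ 2 f 0) :
    ∀ᶠ t in 𝓝 (0:ℝ), DifferentiableAt ℝ f t :=
  (hf.eventually (by norm_num)).mono fun y hy => hy.differentiableAt (by norm_num)

lemma deriv_combo {f g : ℝ → ℝ} (c : ℝ) (hf : DifferentiableAt ℝ f 0)
    (hg : DifferentiableAt ℝ g 0) :
    deriv (fun t => c * f t ^ 2 + g t ^ 2) 0
      = 2 * c * f 0 * deriv f 0 + 2 * g 0 * deriv g 0 := by
  have h : HasDerivAt (fun t => c * f t ^ 2 + g t ^ 2)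
      (c * ((2:ℕ) * f 0 ^ 1 * deriv f 0) + (2:ℕ) * g 0 ^ 1 * deriv g 0) 0 :=
    ((hf.hasDerivAt.pow 2).const_mul c).add (hg.hasDerivAt.pow 2)
  rw [h.deriv]; push_cast; ring

lemma deriv2_combo {f g : ℝ → ℝ} (c : ℝ) (hf : ContDiffAt ℝ 2 f 0)
    (hg : ContDiffAt ℝ 2 g 0) :
    iteratedDeriv 2 (fun t => c * f t ^ 2 + g t ^ 2) 0
      = 2 * c * f 0 * iteratedDeriv 2 f 0 + 2 * c * (deriv f 0) ^ 2
        + 2 * g 0 * iteratedDeriv 2 g 0 + 2 * (deriv g 0) ^ 2 := by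
  have hev : deriv (fun t => c * f t ^ 2 + g t ^ 2)
      =ᶠ[𝓝 (0:ℝ)] fun t => c * (2 * (f t * deriv f t)) + 2 * (g t * deriv g t) := by
    filter_upwards [ev_diff hf, ev_diff hg] with t htf htg
    have h : HasDerivAt (fun t => c * f t ^ 2 + g t ^ 2)
        (c * ((2:ℕ) * f t ^ 1 * deriv f t) + (2:ℕ) * g t ^ 1 * deriv g t) t :=
      ((htf.hasDerivAt.pow 2).const_mul c).add (htg.hasDerivAt.pow 2)
    rw [h.deriv]; push_cast; ring
  have h2 : iteratedDeriv 2 (fun t => c * f t ^ 2 + g t ^ 2) 0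
      = deriv (fun t => c * (2 * (f t * deriv f t)) + 2 * (g t * deriv g t)) 0 := by
    rw [show (2:ℕ) = 1 + 1 from rfl, iteratedDeriv_succ, iteratedDeriv_one]
    exact hev.deriv_eq
  have Hf : HasDerivAt f (deriv f 0) 0 := (hf.differentiableAt (by norm_num)).hasDerivAt
  have Hg : HasDerivAt g (deriv g 0) 0 := (hg.differentiableAt (by norm_num)).hasDerivAt
  have Hf' : HasDerivAt (deriv f) (deriv (deriv f) 0) 0 := (diffAt_deriv hf).hasDerivAt
  have Hg' : HasDerivAt (deriv g) (deriv (deriv g) 0) 0 := (diffAt_deriv hg).hasDerivAt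
  have h3 : HasDerivAt (fun t => c * (2 * (f t * deriv f t)) + 2 * (g t * deriv g t))
      ((2 * (deriv f 0 * deriv f 0 + f 0 * deriv (deriv f) 0)) * c
        + 2 * (deriv g 0 * deriv g 0 + g 0 * deriv (deriv g) 0)) 0 := by
    have := (((Hf.mul Hf').const_mul 2).mul_const c).add ((Hg.mul Hg').const_mul 2)
    have e : (fun t => c * (2 * (f t * deriv f t)) + 2 * (g t * deriv g t))
        = fun t => 2 * (f t * deriv f t) * c + 2 * (g t * deriv g t) := by
      funext t; ring
    rw [e]; exact this.congr_deriv (by ring)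
  rw [h2, h3.deriv, show iteratedDeriv 2 f 0 = deriv (deriv f) 0 by
      rw [show (2:ℕ) = 1 + 1 from rfl, iteratedDeriv_succ, iteratedDeriv_one],
    show iteratedDeriv 2 g 0 = deriv (deriv g) 0 by
      rw [show (2:ℕ) = 1 + 1 from rfl, iteratedDeriv_succ, iteratedDeriv_one]]
  ring

lemma deriv_sqrt_comp {q : ℝ → ℝ} (hq : DifferentiableAt ℝ q 0) (h0 : 0 < q 0) :
    deriv (fun t => Real.sqrt (q t)) 0 = deriv q 0 / (2 * Real.sqrt (q 0)) := by
  have h : HasDerivAt (fun t => Real.sqrt (q t)) (1 / (2 * Real.sqrt (q 0)) * deriv q 0) 0 :=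
    (Real.hasDerivAt_sqrt (ne_of_gt h0)).comp 0 hq.hasDerivAt
  rw [h.deriv]; ring

lemma deriv2_sqrt_comp {q : ℝ → ℝ} (hq : ContDiffAt ℝ 2 q 0) (h0 : 0 < q 0) :
    iteratedDeriv 2 (fun t => Real.sqrt (q t)) 0
      = iteratedDeriv 2 q 0 / (2 * Real.sqrt (q 0))
        - (deriv q 0) ^ 2 / (4 * q 0 * Real.sqrt (q 0)) := by
  have hev0 : ∀ᶠ t in 𝓝 (0:ℝ), 0 < q t := hq.continuousAt.eventually (eventually_gt_nhds h0)
  have hev : deriv (fun t => Real.sqrt (q t))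
      =ᶠ[𝓝 (0:ℝ)] fun t => (2 * Real.sqrt (q t))⁻¹ * deriv q t := by
    filter_upwards [ev_diff hq, hev0] with t ht hqt
    have h : HasDerivAt (fun t => Real.sqrt (q t)) (1 / (2 * Real.sqrt (q t)) * deriv q t) t :=
      (Real.hasDerivAt_sqrt (ne_of_gt hqt)).comp t ht.hasDerivAt
    rw [h.deriv, one_div]
  have hs : Real.sqrt (q 0) * Real.sqrt (q 0) = q 0 := Real.mul_self_sqrt h0.le
  have hspos : 0 < Real.sqrt (q 0) := Real.sqrt_pos.mpr h0
  have Hq : HasDerivAt q (deriv q 0) 0 := (hq.differentiableAt (by norm_num)).hasDerivAt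
  have Hq' : HasDerivAt (deriv q) (deriv (deriv q) 0) 0 := (diffAt_deriv hq).hasDerivAt
  have Hsq : HasDerivAt (fun t => Real.sqrt (q t)) (1 / (2 * Real.sqrt (q 0)) * deriv q 0) 0 :=
    (Real.hasDerivAt_sqrt (ne_of_gt h0)).comp 0 Hq
  have Hden : HasDerivAt (fun t => 2 * Real.sqrt (q t))
      (2 * (1 / (2 * Real.sqrt (q 0)) * deriv q 0)) 0 := Hsq.const_mul 2
  have hdne : 2 * Real.sqrt (q 0) ≠ 0 := by positivity
  have Hinv : HasDerivAt (fun t => (2 * Real.sqrt (q t))⁻¹)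
      (-(2 * (1 / (2 * Real.sqrt (q 0)) * deriv q 0)) / (2 * Real.sqrt (q 0)) ^ 2) 0 :=
    Hden.inv hdne
  have HD : HasDerivAt (fun t => (2 * Real.sqrt (q t))⁻¹ * deriv q t)
      (-(2 * (1 / (2 * Real.sqrt (q 0)) * deriv q 0)) / (2 * Real.sqrt (q 0)) ^ 2 * deriv q 0
        + (2 * Real.sqrt (q 0))⁻¹ * deriv (deriv q) 0) 0 := Hinv.mul Hq'
  have h2 : iteratedDeriv 2 (fun t => Real.sqrt (q t)) 0
      = deriv (fun t => (2 * Real.sqrt (q t))⁻¹ * deriv q t) 0 := by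
    rw [show (2:ℕ) = 1 + 1 from rfl, iteratedDeriv_succ, iteratedDeriv_one]
    exact hev.deriv_eq
  rw [h2, HD.deriv, show iteratedDeriv 2 q 0 = deriv (deriv q) 0 by
      rw [show (2:ℕ) = 1 + 1 from rfl, iteratedDeriv_succ, iteratedDeriv_one]]
  have h4 : (4:ℝ) * q 0 * Real.sqrt (q 0) ≠ 0 := by positivity
  field_simp
  ring_nf
  have key : Real.sqrt (q 0) ^ 5 = Real.sqrt (q 0) ^ 3 * q 0 := by
    rw [show (5:ℕ) = 3 + 2 from rfl, pow_add, Real.sq_sqrt h0.le]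
  rw [Real.sq_sqrt h0.le]

lemma half_div {S Q : ℝ} (hQ : Q ≠ 0) : 2 * (S / (4 * Q)) = S / (2 * Q) := by
  field_simp; ring

lemma hasDerivAt_line (x v : EuclideanSpace ℝ (Fin 3)) (t : ℝ) :
    HasDerivAt (fun s : ℝ => x + s • v) v t := by
  simpa using ((hasDerivAt_id t).smul_const v).const_add x

lemma contDiffAt_comp_line {f : EuclideanSpace ℝ (Fin 3) → ℝ} {x v : EuclideanSpace ℝ (Fin 3)}
    (hf : ContDiffAt ℝ 2 f x) :
    ContDiffAt ℝ 2 (fun t : ℝ => f (x + t • v)) 0 := by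
  have hline : ContDiff ℝ 2 (fun t : ℝ => x + t • v) :=
    contDiff_const.add (contDiff_id.smul contDiff_const)
  refine ContDiffAt.comp 0 ?_ hline.contDiffAt
  simpa using hf

lemma deriv_comp_line {f : EuclideanSpace ℝ (Fin 3) → ℝ} {x v : EuclideanSpace ℝ (Fin 3)}
    (hf : DifferentiableAt ℝ f x) :
    deriv (fun t : ℝ => f (x + t • v)) 0 = fderiv ℝ f x v := by
  have h1 : HasFDerivAt f (fderiv ℝ f x) (x + (0:ℝ) • v) := by
    rw [show x + (0:ℝ) • v = x by simp]; exact hf.hasFDerivAt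
  exact (h1.comp_hasDerivAt 0 (hasDerivAt_line x v 0)).deriv

lemma norm_gradient_sq (f : EuclideanSpace ℝ (Fin 3) → ℝ) (x : EuclideanSpace ℝ (Fin 3)) :
    ‖gradient f x‖ ^ 2 = ∑ i : Fin 3, (fderiv ℝ f x (EuclideanSpace.single i 1)) ^ 2 := by
  have hcomp : ∀ i : Fin 3, fderiv ℝ f x (EuclideanSpace.single i 1) = gradient f x i := by
    intro i
    have : inner ℝ (gradient f x) (EuclideanSpace.single i (1:ℝ))
        = fderiv ℝ f x (EuclideanSpace.single i 1) := by
      rw [gradient, InnerProductSpace.toDual_symm_apply]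
    rw [← this, EuclideanSpace.inner_single_right]
    simp
  simp_rw [hcomp]
  rw [EuclideanSpace.norm_eq, Real.sq_sqrt (by positivity)]
  simp [sq_abs]

set_option maxHeartbeats 1000000 in
theorem P_subharmonic (p γ : ℝ) (hp : 1 ≤ p) (hγ : 0 ≤ γ)
    (F : Set (EuclideanSpace ℝ (Fin 3))) (hF : F.Finite)
    (ψ φ : EuclideanSpace ℝ (Fin 3) → ℝ)
    (hψC2 : ContDiffOn ℝ 2 ψ Fᶜ) (hφC2 : ContDiffOn ℝ 2 φ Fᶜ)
    (hψ0 : ∀ x, 0 ≤ ψ x)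
    (heuler : ∀ x ∈ Fᶜ, lap ψ x = (γ * ψ x ^ (2*p-2) - φ x) * ψ x)
    (hpoisson : ∀ x ∈ Fᶜ, lap φ x = 4*π * ψ x ^ 2) :
    let P : EuclideanSpace ℝ (Fin 3) → ℝ := fun x => Real.sqrt (4*π * ψ x ^ 2 + φ x ^ 2)
    ∀ x ∈ Fᶜ, 0 < P x →
      lap (fun y => P y ^ 2) x ≥ 2 * ‖gradient P x‖ ^ 2 ∧ 0 ≤ lap P x := by
  intro P x hx hPx
  have hopen : IsOpen Fᶜ := hF.isClosed.isOpen_compl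
  have hnx : Fᶜ ∈ 𝓝 x := hopen.mem_nhds hx
  have hψx : ContDiffAt ℝ 2 ψ x := hψC2.contDiffAt hnx
  have hφx : ContDiffAt ℝ 2 φ x := hφC2.contDiffAt hnx
  set fL : Fin 3 → ℝ → ℝ := fun i t => ψ (x + t • EuclideanSpace.single i 1) with hfLdef
  set gL : Fin 3 → ℝ → ℝ := fun i t => φ (x + t • EuclideanSpace.single i 1) with hgLdef
  set qL : Fin 3 → ℝ → ℝ := fun i t => 4*π * fL i t ^ 2 + gL i t ^ 2 with hqLdef
  have hfC : ∀ i, ContDiffAt ℝ 2 (fL i) 0 := fun i => contDiffAt_comp_line hψx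
  have hgC : ∀ i, ContDiffAt ℝ 2 (gL i) 0 := fun i => contDiffAt_comp_line hφx
  have hqC : ∀ i, ContDiffAt ℝ 2 (qL i) 0 := fun i =>
    (contDiffAt_const.mul ((hfC i).pow 2)).add ((hgC i).pow 2)
  have hf0 : ∀ i, fL i 0 = ψ x := fun i => by simp [hfLdef]
  have hg0 : ∀ i, gL i 0 = φ x := fun i => by simp [hgLdef]
  have hQx : 0 < 4*π * ψ x ^ 2 + φ x ^ 2 := Real.sqrt_pos.mp hPx
  have hq0 : ∀ i, qL i 0 = 4*π * ψ x ^ 2 + φ x ^ 2 := fun i => by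
    simp only [hqLdef, hf0, hg0]
  have hq0pos : ∀ i, 0 < qL i 0 := fun i => by rw [hq0]; exact hQx
  have hPxval : P x = Real.sqrt (4*π * ψ x ^ 2 + φ x ^ 2) := rfl
  have hP2 : ∀ y, P y ^ 2 = 4*π * ψ y ^ 2 + φ y ^ 2 := fun y =>
    Real.sq_sqrt (by positivity)
  set a : Fin 3 → ℝ := fun i => deriv (fL i) 0 with ha
  set b : Fin 3 → ℝ := fun i => deriv (gL i) 0 with hb
  set d : Fin 3 → ℝ := fun i => deriv (qL i) 0 with hd
  set A : Fin 3 → ℝ := fun i => iteratedDeriv 2 (fL i) 0 with hA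
  set B : Fin 3 → ℝ := fun i => iteratedDeriv 2 (gL i) 0 with hB
  have hdval : ∀ i, d i = 8*π * ψ x * a i + 2 * φ x * b i := by
    intro i
    rw [hd]
    simp only [hqLdef]
    rw [deriv_combo (4*π) ((hfC i).differentiableAt (by norm_num))
      ((hgC i).differentiableAt (by norm_num)), hf0, hg0]
    ring
  have hID2q : ∀ i, iteratedDeriv 2 (qL i) 0
      = 8*π * ψ x * A i + 8*π * a i ^ 2 + 2 * φ x * B i + 2 * b i ^ 2 := by
    intro i
    simp only [hqLdef]
    rw [deriv2_combo (4*π) (hfC i) (hgC i), hf0, hg0]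
    ring
  have hlapψ : lap ψ x = ∑ i, A i := rfl
  have hlapφ : lap φ x = ∑ i, B i := rfl
  have hsumq : ∑ i, iteratedDeriv 2 (qL i) 0
      = 8*π * (γ * ψ x ^ (2*p-2)) * ψ x ^ 2 + 8*π * ∑ i, a i ^ 2 + 2 * ∑ i, b i ^ 2 := by
    rw [Finset.sum_congr rfl (fun i _ => hID2q i)]
    have hE : ∑ i, A i = (γ * ψ x ^ (2*p-2) - φ x) * ψ x := by
      rw [← hlapψ]; exact heuler x hx
    have hPo : ∑ i, B i = 4*π * ψ x ^ 2 := by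
      rw [← hlapφ]; exact hpoisson x hx
    simp only [Finset.sum_add_distrib, ← Finset.mul_sum]
    rw [hE, hPo]
    ring
  have hQC : ContDiffAt ℝ 2 (fun y => 4*π * ψ y ^ 2 + φ y ^ 2) x :=
    (contDiffAt_const.mul (hψx.pow 2)).add (hφx.pow 2)
  have hPC : ContDiffAt ℝ 2 P x := (Real.contDiffAt_sqrt (ne_of_gt hQx)).comp x hQC
  have hderivP : ∀ i : Fin 3, deriv (fun t : ℝ => P (x + t • EuclideanSpace.single i 1)) 0
      = d i / (2 * P x) := by
    intro i
    have hPq : (fun t : ℝ => P (x + t • EuclideanSpace.single i 1))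
        = fun t => Real.sqrt (qL i t) := rfl
    rw [hPq, deriv_sqrt_comp ((hqC i).differentiableAt (by norm_num)) (hq0pos i),
      hq0 i, ← hPxval]
  have hgrad : ‖gradient P x‖ ^ 2 = (∑ i, d i ^ 2) / (4 * (4*π * ψ x ^ 2 + φ x ^ 2)) := by
    rw [norm_gradient_sq]
    have hterm : ∀ i : Fin 3, (fderiv ℝ P x (EuclideanSpace.single i 1)) ^ 2
        = d i ^ 2 / (4 * (4*π * ψ x ^ 2 + φ x ^ 2)) := by
      intro i
      rw [← deriv_comp_line (hPC.differentiableAt (by norm_num)), hderivP i, div_pow,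
        mul_pow, hP2 x]
      ring_nf
    rw [Finset.sum_congr rfl (fun i _ => hterm i), ← Finset.sum_div]
  have hCS : ∀ i, d i ^ 2 ≤ 4 * (4*π * ψ x ^ 2 + φ x ^ 2) * (4*π * a i ^ 2 + b i ^ 2) := by
    intro i
    rw [hdval i]
    nlinarith [mul_nonneg pi_pos.le (sq_nonneg (ψ x * b i - φ x * a i)), pi_pos]
  have hCSsum : ∑ i, d i ^ 2
      ≤ 4 * (4*π * ψ x ^ 2 + φ x ^ 2) * (4*π * ∑ i, a i ^ 2 + ∑ i, b i ^ 2) := by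
    calc ∑ i, d i ^ 2 ≤ ∑ i, 4 * (4*π * ψ x ^ 2 + φ x ^ 2) * (4*π * a i ^ 2 + b i ^ 2) :=
          Finset.sum_le_sum (fun i _ => hCS i)
      _ = 4 * (4*π * ψ x ^ 2 + φ x ^ 2) * (4*π * ∑ i, a i ^ 2 + ∑ i, b i ^ 2) := by
          rw [← Finset.mul_sum]
          congr 1
          rw [Finset.sum_add_distrib, ← Finset.mul_sum]
  have hγterm : 0 ≤ 8*π * (γ * ψ x ^ (2*p-2)) * ψ x ^ 2 := by
    have h1 : (0:ℝ) ≤ ψ x ^ (2*p-2) := Real.rpow_nonneg (hψ0 x) _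
    have h2 : (0:ℝ) ≤ π := pi_pos.le
    positivity
  have hlapP2 : lap (fun y => P y ^ 2) x = ∑ i, iteratedDeriv 2 (qL i) 0 := by
    unfold lap
    refine Finset.sum_congr rfl (fun i _ => ?_)
    congr 1
    funext t
    exact hP2 _
  have hmain : 2 * ‖gradient P x‖ ^ 2 ≤ ∑ i, iteratedDeriv 2 (qL i) 0 := by
    rw [hgrad, hsumq]
    have hq2 : (0:ℝ) < 2 * (4*π * ψ x ^ 2 + φ x ^ 2) := by linarith
    rw [half_div (ne_of_gt hQx), div_le_iff₀ hq2]
    nlinarith [hCSsum, hγterm]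
  constructor
  · rw [hlapP2]; exact hmain
  have hlapP : lap P x = (∑ i, iteratedDeriv 2 (qL i) 0) / (2 * P x)
      - (∑ i, d i ^ 2) / (4 * (4*π * ψ x ^ 2 + φ x ^ 2) * P x) := by
    unfold lap
    have hterm : ∀ i : Fin 3,
        iteratedDeriv 2 (fun t : ℝ => P (x + t • EuclideanSpace.single i 1)) 0
        = iteratedDeriv 2 (qL i) 0 / (2 * P x)
          - d i ^ 2 / (4 * (4*π * ψ x ^ 2 + φ x ^ 2) * P x) := by
      intro i
      have hPq : (fun t : ℝ => P (x + t • EuclideanSpace.single i 1))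
          = fun t => Real.sqrt (qL i t) := rfl
      rw [hPq, deriv2_sqrt_comp (hqC i) (hq0pos i), hq0 i, ← hPxval]
    rw [Finset.sum_congr rfl (fun i _ => hterm i), Finset.sum_sub_distrib,
      ← Finset.sum_div, ← Finset.sum_div]
  rw [hlapP, sub_nonneg, div_le_div_iff₀ (by positivity) (by positivity)]
  have h2 : (∑ i, d i ^ 2) / (2 * (4*π * ψ x ^ 2 + φ x ^ 2)) ≤ ∑ i, iteratedDeriv 2 (qL i) 0 := by
    have hm := hmain
    rw [hgrad] at hm
    calc (∑ i, d i ^ 2) / (2 * (4*π * ψ x ^ 2 + φ x ^ 2))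
        = 2 * ((∑ i, d i ^ 2) / (4 * (4*π * ψ x ^ 2 + φ x ^ 2))) := (half_div (ne_of_gt hQx)).symm
      _ ≤ _ := hm
  have hsd : 0 ≤ ∑ i, d i ^ 2 := Finset.sum_nonneg (fun i _ => sq_nonneg _)
  rw [div_le_iff₀ (by positivity : (0:ℝ) < 2 * (4*π * ψ x ^ 2 + φ x ^ 2))] at h2
  nlinarith [hPx, hQx, h2]
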